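/- Let k be a field, A a commutative k-algebra, and n ≥ 1. If χ is an invertible n × n matrix over A ⊗[k] A with det(χ) = 1 satisfying the cocycle condition ∂₂(χ) = ∂₁(χ) · ∂₃(χ) (the ring homomorphisms ∂ᵢ being applied entrywise), then there exists an invertible n × n matrix α over A with det(α) = 1 such that χ = δ₁(α) · δ₂(α)⁻¹. (This expresses that the Amitsur cohomology set H¹(A/k, SLₙ) is trivial for every algebra A over a field k.) -/

import Mathlib

open TensorProduct

/-- `δ₁ : A → A ⊗[k] A`, `a ↦ 1 ⊗ a`. -/
noncomputable def amitsurD1 (k A : Type*) [CommRing k] [CommRing A] [Algebra k A] :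
    A →ₐ[k] A ⊗[k] A :=
  Algebra.TensorProduct.includeRight

/-- `δ₂ : A → A ⊗[k] A`, `a ↦ a ⊗ 1`. -/
noncomputable def amitsurD2 (k A : Type*) [CommRing k] [CommRing A] [Algebra k A] :
    A →ₐ[k] A ⊗[k] A :=
  Algebra.TensorProduct.includeLeft

/-- `∂₁ : A ⊗[k] A → A ⊗[k] A ⊗[k] A`, `a ⊗ b ↦ 1 ⊗ a ⊗ b`. -/
noncomputable def amitsurP1 (k A : Type*) [CommRing k] [CommRing A] [Algebra k A] :
    A ⊗[k] A →ₐ[k] A ⊗[k] (A ⊗[k] A) :=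
  Algebra.TensorProduct.includeRight

/-- `∂₂ : A ⊗[k] A → A ⊗[k] A ⊗[k] A`, `a ⊗ b ↦ a ⊗ 1 ⊗ b`. -/
noncomputable def amitsurP2 (k A : Type*) [CommRing k] [CommRing A] [Algebra k A] :
    A ⊗[k] A →ₐ[k] A ⊗[k] (A ⊗[k] A) :=
  Algebra.TensorProduct.map (AlgHom.id k A) Algebra.TensorProduct.includeRight

/-- `∂₃ : A ⊗[k] A → A ⊗[k] A ⊗[k] A`, `a ⊗ b ↦ a ⊗ b ⊗ 1`. -/
noncomputable def amitsurP3 (k A : Type*) [CommRing k] [CommRing A] [Algebra k A] :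
    A ⊗[k] A →ₐ[k] A ⊗[k] (A ⊗[k] A) :=
  Algebra.TensorProduct.map (AlgHom.id k A) Algebra.TensorProduct.includeLeft

namespace AmitsurAux

variable {k A : Type*} [Field k] [CommRing A] [Algebra k A] {ι : Type*} (b : Module.Basis ι k A)

noncomputable def rho (l : ι) : A ⊗[k] A →ₗ[k] A :=
  (TensorProduct.rid k A).toLinearMap ∘ₗ LinearMap.lTensor A (b.coord l)

@[simp] lemma rho_tmul (l : ι) (u w : A) : rho b l (u ⊗ₜ w) = b.repr w l • u := by
  simp [rho]

noncomputable def phi (l : ι) : A ⊗[k] (A ⊗[k] A) →ₗ[k] A ⊗[k] A :=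
  LinearMap.lTensor A (rho b l)

@[simp] lemma phi_tmul (l : ι) (u : A) (y : A ⊗[k] A) :
    phi b l (u ⊗ₜ y) = u ⊗ₜ rho b l y := rfl

lemma phi_P2 (l : ι) (x : A ⊗[k] A) :
    phi b l (amitsurP2 k A x) = amitsurD2 k A (rho b l x) := by
  induction x with
  | zero => simp
  | tmul u w =>
      simp only [amitsurP2, amitsurD2, Algebra.TensorProduct.map_tmul, AlgHom.coe_id,
        id_eq, Algebra.TensorProduct.includeRight_apply, phi_tmul, rho_tmul,
        Algebra.TensorProduct.includeLeft_apply]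
      rw [tmul_smul, smul_tmul']
  | add x y hx hy => simp [map_add, hx, hy]

lemma phi_P3_P1 (l : ι) (x y : A ⊗[k] A) :
    phi b l (amitsurP3 k A x * amitsurP1 k A y) = x * amitsurD1 k A (rho b l y) := by
  induction x with
  | zero => simp
  | add x x' hx hx' => rw [map_add, add_mul, map_add, add_mul, hx, hx']
  | tmul a c =>
      induction y with
      | zero => simp
      | add y y' hy hy' =>
          rw [map_add (amitsurP1 k A), mul_add, map_add, hy, hy', map_add (rho b l),
            map_add (amitsurD1 k A), mul_add]
      | tmul u v =>
          simp only [amitsurP3, amitsurP1, amitsurD1, Algebra.TensorProduct.map_tmul,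
            AlgHom.coe_id, id_eq, Algebra.TensorProduct.includeLeft_apply,
            Algebra.TensorProduct.includeRight_apply, Algebra.TensorProduct.tmul_mul_tmul,
            one_mul, mul_one, phi_tmul, rho_tmul]
          rw [mul_smul_comm]

lemma rho_D1_mul_D2 (l : ι) (a v : A) :
    rho b l (amitsurD1 k A a * amitsurD2 k A v) = b.repr a l • v := by
  simp only [amitsurD1, amitsurD2, Algebra.TensorProduct.includeRight_apply,
    Algebra.TensorProduct.includeLeft_apply, Algebra.TensorProduct.tmul_mul_tmul,
    one_mul, mul_one, rho_tmul]

lemma exists_finset_rho (x : A ⊗[k] A) :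
    ∃ S : Finset ι, (∀ l ∉ S, rho b l x = 0) ∧
      Algebra.TensorProduct.lmul' k (S := A) x = ∑ l ∈ S, b l * rho b l x := by
  classical
  induction x with
  | zero => exact ⟨∅, by simp, by simp⟩
  | tmul u w =>
      refine ⟨(b.repr w).support, fun l hl => ?_, ?_⟩
      · rw [rho_tmul, Finsupp.notMem_support_iff.mp hl, zero_smul]
      · rw [Algebra.TensorProduct.lmul'_apply_tmul]
        conv_lhs => rw [← b.linearCombination_repr w]
        rw [Finsupp.linearCombination_apply, Finsupp.sum, Finset.mul_sum]
        refine Finset.sum_congr rfl fun l _ => ?_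
        rw [rho_tmul, mul_smul_comm, mul_smul_comm, mul_comm]
  | add x y hx hy =>
      obtain ⟨S, hS0, hS⟩ := hx
      obtain ⟨T, hT0, hT⟩ := hy
      refine ⟨S ∪ T, fun l hl => ?_, ?_⟩
      · rw [map_add, hS0 l (fun h => hl (Finset.mem_union_left _ h)),
          hT0 l (fun h => hl (Finset.mem_union_right _ h)), add_zero]
      · rw [map_add, hS, hT]
        rw [Finset.sum_subset (Finset.subset_union_left : S ⊆ S ∪ T)
            (fun l _ hl => by rw [hS0 l hl, mul_zero]),
          Finset.sum_subset (Finset.subset_union_right : T ⊆ S ∪ T)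
            (fun l _ hl => by rw [hT0 l hl, mul_zero]), ← Finset.sum_add_distrib]
        refine Finset.sum_congr rfl fun l _ => ?_
        rw [map_add, mul_add]


lemma exists_algebraMap_of_d1_eq_d2 [Nontrivial A] {a : A}
    (h : amitsurD1 k A a = amitsurD2 k A a) : ∃ c : k, a = algebraMap k A c := by
  classical
  have h1 : LinearIndepOn k id ({1} : Set A) :=
    (linearIndepOn_singleton_iff k).mpr one_ne_zero
  let b : Module.Basis _ k A := Module.Basis.extend h1
  have hmem : (1 : A) ∈ h1.extend (Set.subset_univ _) :=
    h1.subset_extend _ (Set.mem_singleton 1)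
  let i₀ : h1.extend (Set.subset_univ _) := ⟨1, hmem⟩
  have hb0 : b i₀ = 1 := Module.Basis.extend_apply_self h1 i₀
  have hrepr1 : b.repr 1 = Finsupp.single i₀ 1 := by
    have h9 := b.repr_self i₀
    rwa [hb0] at h9
  have key : ∀ l, b.repr a l • (1:A) = (if l = i₀ then a else 0) := by
    intro l
    have h2 := congrArg (rho b l) h
    simp only [amitsurD1, amitsurD2, Algebra.TensorProduct.includeRight_apply,
      Algebra.TensorProduct.includeLeft_apply, rho_tmul] at h2
    rw [hrepr1] at h2
    rw [h2]
    by_cases hl : l = i₀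
    · subst hl; simp [Finsupp.single_apply]
    · rw [if_neg hl, Finsupp.single_apply, if_neg (fun h => hl h.symm), zero_smul]
  have hz : ∀ l, l ≠ i₀ → b.repr a l = 0 := by
    intro l hl
    have h3 := key l
    rw [if_neg hl, ← Algebra.algebraMap_eq_smul_one] at h3
    exact (algebraMap k A).injective (h3.trans (map_zero _).symm)
  refine ⟨b.repr a i₀, ?_⟩
  have hsingle : b.repr a = Finsupp.single i₀ (b.repr a i₀) := by
    ext l
    by_cases hl : l = i₀
    · subst hl; simp
    · simp [Finsupp.single_apply, Ne.symm hl, hz l hl, hl]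
  have ha : a = b.repr a i₀ • (1:A) := by
    conv_lhs => rw [← b.linearCombination_repr a, hsingle]
    rw [Finsupp.linearCombination_single, hb0]
  rw [Algebra.algebraMap_eq_smul_one]
  exact ha

lemma linearIndependent_A {n m : ℕ} (χ : (Matrix (Fin n) (Fin n) (A ⊗[k] A))ˣ)
    (v : Fin m → (Fin n → A))
    (hv : ∀ j i, amitsurD1 k A (v j i) = ∑ p, χ.val i p * amitsurD2 k A (v j p))
    (hk : LinearIndependent k v) : LinearIndependent A v := by
  classical
  let b : Module.Basis _ k A := Module.Basis.ofVectorSpace k A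
  rw [Fintype.linearIndependent_iff]
  intro g hg
  set Y : Fin n → A ⊗[k] A :=
    fun p => ∑ j, amitsurD1 k A (g j) * amitsurD2 k A (v j p) with hYdef
  have hgi : ∀ i, ∑ j, g j * v j i = 0 := by
    intro i
    have := congrFun hg i
    simpa [Finset.sum_apply] using this
  have h1 : χ.val.mulVec Y = 0 := by
    funext i
    simp only [Matrix.mulVec, dotProduct, Pi.zero_apply, hYdef]
    calc ∑ p, χ.val i p * ∑ j, amitsurD1 k A (g j) * amitsurD2 k A (v j p)
        = ∑ j, ∑ p, χ.val i p * (amitsurD1 k A (g j) * amitsurD2 k A (v j p)) := by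
          simp_rw [Finset.mul_sum]
          exact Finset.sum_comm
      _ = ∑ j, amitsurD1 k A (g j) * ∑ p, χ.val i p * amitsurD2 k A (v j p) := by
          refine Finset.sum_congr rfl fun j _ => ?_
          rw [Finset.mul_sum]
          exact Finset.sum_congr rfl fun p _ => by ring
      _ = ∑ j, amitsurD1 k A (g j) * amitsurD1 k A (v j i) := by
          refine Finset.sum_congr rfl fun j _ => by rw [← hv j i]
      _ = amitsurD1 k A (∑ j, g j * v j i) := by rw [map_sum]; simp [map_mul]
      _ = 0 := by rw [hgi i, map_zero]
  have h2 : Y = 0 := by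
    have h3 := congrArg (fun z => ((χ⁻¹ : _ˣ).val).mulVec z) h1
    simpa [Matrix.mulVec_mulVec, Units.inv_mul] using h3
  have h4 : ∀ l, ∑ j, b.repr (g j) l • v j = 0 := by
    intro l
    funext p
    have h5 := congrArg (rho b l) (congrFun h2 p)
    rw [hYdef] at h5
    simp only [Pi.zero_apply, map_zero, map_sum, rho_D1_mul_D2] at h5
    simpa [Finset.sum_apply] using h5
  have h6 : ∀ j, ∀ l, b.repr (g j) l = 0 := by
    intro j l
    exact Fintype.linearIndependent_iff.mp hk (fun j => b.repr (g j) l) (h4 l) j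
  intro j
  have : b.repr (g j) = 0 := Finsupp.ext fun l => h6 j l
  simpa using congrArg b.repr.symm this

lemma mem_span_V {n : ℕ} (χ : (Matrix (Fin n) (Fin n) (A ⊗[k] A))ˣ)
    (hcoc : χ.val.map (amitsurP2 k A) =
      χ.val.map (amitsurP1 k A) * χ.val.map (amitsurP3 k A))
    (w : Fin n → A) :
    w ∈ Submodule.span A {v : Fin n → A | ∀ i,
      amitsurD1 k A (v i) = ∑ p, χ.val i p * amitsurD2 k A (v p)} := by
  classical
  set Vset : Set (Fin n → A) := {v : Fin n → A | ∀ i,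
      amitsurD1 k A (v i) = ∑ p, χ.val i p * amitsurD2 k A (v p)} with hVset
  let F : ((A ⊗[k] A) →ₐ[k] (A ⊗[k] (A ⊗[k] A))) →
      ((Matrix (Fin n) (Fin n) (A ⊗[k] A)) →* Matrix (Fin n) (Fin n) (A ⊗[k] (A ⊗[k] A))) :=
    fun f => f.toRingHom.mapMatrix.toMonoidHom
  have hval : ∀ (f : (A ⊗[k] A) →ₐ[k] (A ⊗[k] (A ⊗[k] A)))
      (u : (Matrix (Fin n) (Fin n) (A ⊗[k] A))ˣ),
      (Units.map (F f) u).val = u.val.map f := fun f u => by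
    simp [F, Units.coe_map, RingHom.mapMatrix_apply]
  have hXunit : Units.map (F (amitsurP2 k A)) χ =
      Units.map (F (amitsurP1 k A)) χ * Units.map (F (amitsurP3 k A)) χ :=
    Units.ext (by rw [Units.val_mul, hval, hval, hval]; exact hcoc)
  have hXinv : Units.map (F (amitsurP2 k A)) χ⁻¹ =
      Units.map (F (amitsurP3 k A)) χ⁻¹ * Units.map (F (amitsurP1 k A)) χ⁻¹ := by
    rw [map_inv, map_inv, map_inv, hXunit, mul_inv_rev]
  have hInv : (χ⁻¹ : _ˣ).val.map (amitsurP2 k A) =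
      (χ⁻¹ : _ˣ).val.map (amitsurP3 k A) * (χ⁻¹ : _ˣ).val.map (amitsurP1 k A) := by
    have h := congrArg Units.val hXinv
    rwa [Units.val_mul, hval, hval, hval] at h
  let b : Module.Basis _ k A := Module.Basis.ofVectorSpace k A
  let D : _ → Matrix (Fin n) (Fin n) A :=
    fun l => Matrix.of fun i j => rho b l ((χ⁻¹ : _ˣ).val i j)
  have hD : ∀ l, (D l).map (amitsurD2 k A) =
      (χ⁻¹ : _ˣ).val * (D l).map (amitsurD1 k A) := by
    intro l
    ext i j
    simp only [Matrix.map_apply, Matrix.mul_apply, Matrix.of_apply, D]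
    have h7 := congrArg (phi b l) (congrFun (congrFun hInv i) j)
    simp only [Matrix.map_apply, Matrix.mul_apply, map_sum] at h7
    rw [phi_P2] at h7
    rw [h7]
    exact Finset.sum_congr rfl fun p _ => phi_P3_P1 b l _ _
  have hDV : ∀ l, (D l).map (amitsurD1 k A) = χ.val * (D l).map (amitsurD2 k A) := by
    intro l
    rw [hD l, ← mul_assoc, Units.mul_inv, one_mul]
  have hcolV : ∀ l j, (fun i => D l i j) ∈ Vset := by
    intro l j i
    have h8 := congrFun (congrFun (hDV l) i) j
    simpa [Matrix.map_apply, Matrix.mul_apply] using h8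
  let μ : A ⊗[k] A →ₐ[k] A := Algebra.TensorProduct.lmul' k
  let Fμ : Matrix (Fin n) (Fin n) (A ⊗[k] A) →* Matrix (Fin n) (Fin n) A :=
    μ.toRingHom.mapMatrix.toMonoidHom
  let Xμ := Units.map Fμ χ
  have hXμinv : ((Xμ⁻¹ : _ˣ).val) = (χ⁻¹ : _ˣ).val.map μ := by
    rw [← map_inv]
    simp [Fμ, Units.coe_map, RingHom.mapMatrix_apply]
  have hcol : ∀ j, (fun i => (χ⁻¹ : _ˣ).val.map μ i j) ∈ Submodule.span A Vset := by
    intro j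
    choose S hS0 hS using fun i => exists_finset_rho b ((χ⁻¹ : _ˣ).val i j)
    have hTs : ∀ i, S i ⊆ Finset.univ.biUnion S :=
      fun i => Finset.subset_biUnion_of_mem S (Finset.mem_univ i)
    have hsum : (fun i => (χ⁻¹ : _ˣ).val.map μ i j) =
        ∑ l ∈ Finset.univ.biUnion S, b l • (fun i => D l i j) := by
      funext i
      rw [Finset.sum_apply]
      simp only [Pi.smul_apply, smul_eq_mul]
      rw [Matrix.map_apply, hS i,
        Finset.sum_subset (hTs i) (fun l _ hl => by rw [hS0 i l hl, mul_zero])]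
      rfl
    rw [hsum]
    exact Submodule.sum_mem _ fun l _ =>
      Submodule.smul_mem _ _ (Submodule.subset_span (hcolV l j))
  have h1 : ((Xμ⁻¹ : _ˣ).val).mulVec (Xμ.val.mulVec w) = w := by
    rw [Matrix.mulVec_mulVec, Units.inv_mul, Matrix.one_mulVec]
  have hw : w = ∑ j, (Xμ.val.mulVec w) j • (fun i => (χ⁻¹ : _ˣ).val.map μ i j) := by
    rw [hXμinv] at h1
    funext i
    conv_lhs => rw [← h1]
    simp [Matrix.mulVec, dotProduct, Finset.sum_apply, mul_comm]
  rw [hw]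
  exact Submodule.sum_mem _ fun j _ => Submodule.smul_mem _ _ (hcol j)

end AmitsurAux

open AmitsurAux in
/-- `H¹(A/k, SLₙ)` is trivial for every algebra `A` over a field `k`:
every matrix 1-cocycle `χ ∈ SLₙ(A ⊗[k] A)` is of the form `δ₁(α)·δ₂(α)⁻¹`
with `det α = 1`. -/
theorem amitsur_h1_SLn_trivial (k A : Type*) [Field k] [CommRing A] [Algebra k A]
    (n : ℕ) (hn : 1 ≤ n)
    (χ : (Matrix (Fin n) (Fin n) (A ⊗[k] A))ˣ)
    (hdet : χ.val.det = 1)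
    (hcoc : χ.val.map (amitsurP2 k A) =
      χ.val.map (amitsurP1 k A) * χ.val.map (amitsurP3 k A)) :
    ∃ α : (Matrix (Fin n) (Fin n) A)ˣ,
      α.val.det = 1 ∧
      χ = Units.map ((amitsurD1 k A).toRingHom.mapMatrix.toMonoidHom) α *
          (Units.map ((amitsurD2 k A).toRingHom.mapMatrix.toMonoidHom) α)⁻¹ := by
  classical
  rcases subsingleton_or_nontrivial A with hA | hA
  · haveI : Subsingleton (A ⊗[k] A) := Module.subsingleton A _
    exact ⟨1, Subsingleton.elim _ _, Subsingleton.elim _ _⟩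
  set Vset : Set (Fin n → A) := {v | ∀ i,
    amitsurD1 k A (v i) = ∑ p, χ.val i p * amitsurD2 k A (v p)} with hVsetdef
  let SV : Submodule k (Fin n → A) :=
    { carrier := Vset
      add_mem' := by
        intro x y hx hy i
        simp only [hVsetdef, Set.mem_setOf_eq] at hx hy ⊢
        rw [Pi.add_apply, map_add, hx i, hy i, ← Finset.sum_add_distrib]
        exact Finset.sum_congr rfl fun p _ => by rw [Pi.add_apply, map_add, mul_add]
      zero_mem' := by intro i; simp
      smul_mem' := by
        intro c x hx i
        simp only [hVsetdef, Set.mem_setOf_eq] at hx ⊢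
        rw [Pi.smul_apply, map_smul, hx i, Finset.smul_sum]
        exact Finset.sum_congr rfl fun p _ => by
          rw [Pi.smul_apply, map_smul, mul_smul_comm] }
  have hspan : ∀ w : Fin n → A, w ∈ Submodule.span A Vset := mem_span_V χ hcoc
  have hfin : ∀ i : Fin n, ∃ T : Finset (Fin n → A), ↑T ⊆ Vset ∧
      Pi.basisFun A (Fin n) i ∈ Submodule.span A (T : Set (Fin n → A)) :=
    fun i => Submodule.mem_span_finite_of_mem_span (hspan _)
  choose T hT1 hT2 using hfin
  set T' : Finset (Fin n → A) := Finset.univ.biUnion T with hT'def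
  have hT'sub : ↑T' ⊆ Vset := by
    intro x hx
    simp only [hT'def, Finset.coe_biUnion, Set.mem_iUnion, Finset.mem_coe] at hx
    obtain ⟨i, _, hxi⟩ := hx
    exact hT1 i hxi
  have hT'span : Submodule.span A (T' : Set (Fin n → A)) = ⊤ := by
    rw [eq_top_iff, ← (Pi.basisFun A (Fin n)).span_eq, Submodule.span_le]
    rintro x ⟨i, rfl⟩
    refine Submodule.span_mono ?_ (hT2 i)
    intro y hy
    exact Finset.mem_coe.2 (Finset.mem_biUnion.2 ⟨i, Finset.mem_univ i, Finset.mem_coe.1 hy⟩)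
  set W : Submodule k (Fin n → A) := Submodule.span k (T' : Set (Fin n → A)) with hWdef
  haveI : FiniteDimensional k W := FiniteDimensional.span_of_finite k T'.finite_toSet
  set d := Module.finrank k W with hd
  let bw : Module.Basis (Fin d) k W := Module.finBasis k W
  let wfam : Fin d → (Fin n → A) := fun j => (bw j : Fin n → A)
  have hWV : W ≤ SV := Submodule.span_le.2 hT'sub
  have hwV : ∀ j, wfam j ∈ Vset := fun j => hWV (bw j).2
  have hkind : LinearIndependent k wfam :=
    bw.linearIndependent.map' W.subtype (Submodule.ker_subtype W)
  have hAind : LinearIndependent A wfam :=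
    linearIndependent_A χ wfam (fun j i => hwV j i) hkind
  have hAspan : ⊤ ≤ Submodule.span A (Set.range wfam) := by
    rw [← hT'span, Submodule.span_le]
    intro t ht
    have hrepr := bw.sum_repr ⟨t, Submodule.subset_span ht⟩
    have ht2 : t = ∑ j, bw.repr ⟨t, Submodule.subset_span ht⟩ j • wfam j := by
      have h9 := congrArg (W.subtype) hrepr
      simp only [map_sum, map_smul, Submodule.subtype_apply] at h9
      exact h9.symm
    rw [ht2]
    refine Submodule.sum_mem _ fun j _ => ?_
    rw [← algebraMap_smul A (bw.repr ⟨t, Submodule.subset_span ht⟩ j) (wfam j)]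
    exact Submodule.smul_mem _ _ (Submodule.subset_span ⟨j, rfl⟩)
  let bA : Module.Basis (Fin d) A (Fin n → A) := Module.Basis.mk hAind hAspan
  let e : Fin d ≃ Fin n := bA.indexEquiv (Pi.basisFun A (Fin n))
  let bA' : Module.Basis (Fin n) A (Fin n → A) := bA.reindex e
  have hbA' : ∀ j, ⇑bA' j ∈ Vset := fun j => by
    show bA' j ∈ Vset
    rw [Module.Basis.reindex_apply, Module.Basis.mk_apply]
    exact hwV _
  let α₀ : Matrix (Fin n) (Fin n) A := Matrix.of fun i j => bA' j i
  have hα₀ : α₀ = (Pi.basisFun A (Fin n)).toMatrix bA' := by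
    ext i j
    simp [α₀, Module.Basis.toMatrix_apply, Pi.basisFun_repr]
  have hdet0 : IsUnit α₀.det := by
    haveI := (Pi.basisFun A (Fin n)).invertibleToMatrix bA'
    rw [hα₀]
    exact Matrix.isUnit_det_of_invertible _
  have hrel : ∀ β : Matrix (Fin n) (Fin n) A, (∀ j, (fun i => β i j) ∈ Vset) →
      β.map (amitsurD1 k A) = χ.val * β.map (amitsurD2 k A) := by
    intro β hβ
    ext i j
    simp only [Matrix.map_apply, Matrix.mul_apply]
    exact hβ j i
  have hcol0 : ∀ j, (fun i => α₀ i j) ∈ Vset := fun j => hbA' j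
  have hrel0 := hrel α₀ hcol0
  have hdd : amitsurD1 k A α₀.det = amitsurD2 k A α₀.det := by
    have h1 : (α₀.map (amitsurD1 k A)).det = χ.val.det * (α₀.map (amitsurD2 k A)).det := by
      rw [hrel0, Matrix.det_mul]
    rw [hdet, one_mul] at h1
    rw [AlgHom.map_det, AlgHom.map_det]
    exact h1
  obtain ⟨c, hc⟩ := exists_algebraMap_of_d1_eq_d2 hdd
  have hc0 : c ≠ 0 := by
    rintro rfl
    rw [map_zero] at hc
    rw [hc] at hdet0
    exact not_isUnit_zero hdet0
  let i₁ : Fin n := ⟨0, hn⟩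
  let c' : Fin n → k := Function.update (fun _ => 1) i₁ c⁻¹
  let dv : Fin n → A := fun j => algebraMap k A (c' j)
  let α : Matrix (Fin n) (Fin n) A := α₀ * Matrix.diagonal dv
  have hcolα : ∀ j, (fun i => α i j) ∈ Vset := by
    intro j
    have h10 : (fun i => α i j) = c' j • (fun i => α₀ i j) := by
      funext i
      simp [α, Matrix.mul_diagonal, dv, Algebra.smul_def, mul_comm]
    rw [h10]
    exact SV.smul_mem _ (hcol0 j)
  have hrelα := hrel α hcolα
  have hdetα : α.det = 1 := by
    have hprod : ∏ j, c' j = c⁻¹ := by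
      rw [Finset.prod_update_of_mem (Finset.mem_univ i₁)]
      simp
    have h11 : ∏ j, dv j = algebraMap k A c⁻¹ := by
      rw [← map_prod, hprod]
    rw [Matrix.det_mul, Matrix.det_diagonal, hc, h11, ← map_mul,
      mul_inv_cancel₀ hc0, map_one]
  refine ⟨Matrix.nonsingInvUnit α (by rw [hdetα]; exact isUnit_one), hdetα, ?_⟩
  rw [eq_mul_inv_iff_mul_eq]
  apply Units.ext
  rw [Units.val_mul, Units.coe_map, Units.coe_map]
  simp only [MonoidHom.coe_coe, RingHom.mapMatrix_apply, AlgHom.toRingHom_eq_coe,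
    AlgHom.coe_toRingHom]
  exact hrelα.symm
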